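/- For every integer k with 0 ≤ k ≤ n and every α ∈ ⋀^k E, the following are equivalent: (i) α ∧ η = 0 for every η ∈ ⋀^{2n−k}E with ω ∧ η = 0; (ii) α ∈ ω ∧ ⋀^{k−2}E, i.e. α = ω ∧ β for some β ∈ ⋀^{k−2}E (for k ≤ 1 this means α = 0). In other words, the wedge-product pairing between ⋀^k E / (ω ∧ ⋀^{k−2}E) and ker W_{2n−k} with values in ⋀^{2n}E has trivial left kernel. -/

import Mathlib

open ExteriorAlgebra


noncomputable section Aux

variable {E : Type*} [AddCommGroup E] [Module ℝ E] {N : ℕ} (b : Module.Basis (Fin N) ℝ E)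

/-- product of `ι (b i)` over a list of indices -/
def eL (l : List (Fin N)) : ExteriorAlgebra ℝ E := (l.map fun i => ι ℝ (b i)).prod

lemma eL_nil : eL b [] = 1 := rfl

lemma eL_cons (i : Fin N) (l : List (Fin N)) : eL b (i :: l) = ι ℝ (b i) * eL b l := by
  simp [eL]

lemma eL_append (l₁ l₂ : List (Fin N)) : eL b (l₁ ++ l₂) = eL b l₁ * eL b l₂ := by
  simp [eL]

lemma eL_mem (l : List (Fin N)) : eL b l ∈ ⋀[ℝ]^l.length E := by
  induction l with
  | nil => exact SetLike.one_mem_graded (A := fun i : ℕ => ⋀[ℝ]^i E)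
  | cons i l ih =>
      rw [eL_cons]
      have h1 : ι ℝ (b i) ∈ ⋀[ℝ]^1 E := by
        rw [exteriorPower, pow_one]; exact LinearMap.mem_range_self _ _
      have := SetLike.mul_mem_graded (A := fun i : ℕ => ⋀[ℝ]^i E) h1 ih
      simpa [Nat.add_comm] using this

lemma eL_perm {l₁ l₂ : List (Fin N)} (h : l₁.Perm l₂) :
    ∃ ε : ℝ, (ε = 1 ∨ ε = -1) ∧ eL b l₁ = ε • eL b l₂ := by
  induction h with
  | nil => exact ⟨1, Or.inl rfl, by simp⟩
  | cons x _ ih =>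
      obtain ⟨ε, hε, h⟩ := ih
      exact ⟨ε, hε, by rw [eL_cons, eL_cons, h, mul_smul_comm]⟩
  | swap x y l =>
      refine ⟨-1, Or.inr rfl, ?_⟩
      rw [eL_cons, eL_cons, eL_cons, eL_cons, ← mul_assoc, ← mul_assoc]
      have : ι ℝ (b y) * ι ℝ (b x) = -(ι ℝ (b x) * ι ℝ (b y)) :=
        eq_neg_of_add_eq_zero_left (ι_add_mul_swap _ _)
      rw [this]; simp
  | trans _ _ ih₁ ih₂ =>
      obtain ⟨ε₁, hε₁, h₁⟩ := ih₁
      obtain ⟨ε₂, hε₂, h₂⟩ := ih₂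
      refine ⟨ε₁ * ε₂, ?_, by rw [h₁, h₂, smul_smul]⟩
      rcases hε₁ with rfl | rfl <;> rcases hε₂ with rfl | rfl <;> simp

lemma eL_eq_zero_of_not_nodup {l : List (Fin N)} (h : ¬ l.Nodup) : eL b l = 0 := by
  induction l with
  | nil => simp at h
  | cons a l ih =>
      rw [List.nodup_cons, not_and_or] at h
      rcases h with h | h
      · push_neg at h
        have hp : (a :: l).Perm (a :: a :: l.erase a) :=
          (List.perm_cons_erase h).cons a
        obtain ⟨ε, -, he⟩ := eL_perm b hp
        rw [he, eL_cons, eL_cons, ← mul_assoc, ι_sq_zero, zero_mul, smul_zero]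
      · rw [eL_cons, ih h, mul_zero]

lemma eL_ofFn {k : ℕ} (r : Fin k → Fin N) :
    eL b (List.ofFn r) = ιMulti ℝ k (fun i => b (r i)) := by
  rw [eL, List.map_ofFn, ιMulti_apply]
  rfl

lemma eL_eq_ιMulti (l : List (Fin N)) :
    eL b l = ιMulti ℝ l.length (fun i => b (l.get i)) := by
  conv_lhs => rw [← List.ofFn_get l]
  exact eL_ofFn b l.get

/-- basis monomial attached to a finset of indices -/
def esF (s : Finset (Fin N)) : ExteriorAlgebra ℝ E := eL b (s.sort (· ≤ ·))

lemma esF_mem (s : Finset (Fin N)) : esF b s ∈ ⋀[ℝ]^s.card E := by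
  have := eL_mem b (s.sort (· ≤ ·))
  rwa [Finset.length_sort] at this

lemma esF_mul_of_not_disjoint {s t : Finset (Fin N)} (h : ¬ Disjoint s t) :
    esF b s * esF b t = 0 := by
  rw [esF, esF, ← eL_append]
  apply eL_eq_zero_of_not_nodup
  rw [List.nodup_append]
  push_neg
  intro h1 h2
  obtain ⟨a, has, hat⟩ := Finset.not_disjoint_iff.mp h
  exact ⟨a, by simpa using has, a, by simpa using hat, rfl⟩

lemma esF_mul_of_disjoint {s t : Finset (Fin N)} (h : Disjoint s t) :
    ∃ ε : ℝ, (ε = 1 ∨ ε = -1) ∧ esF b s * esF b t = ε • esF b (s ∪ t) := by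
  have hperm : (s.sort (· ≤ ·) ++ t.sort (· ≤ ·)).Perm ((s ∪ t).sort (· ≤ ·)) := by
    rw [← Multiset.coe_eq_coe, ← Multiset.coe_add, Finset.sort_eq, Finset.sort_eq,
      Finset.sort_eq, ← Finset.disjUnion_eq_union s t h]; rfl
  obtain ⟨ε, hε, he⟩ := eL_perm b hperm
  exact ⟨ε, hε, by rw [esF, esF, ← eL_append, he]; rfl⟩


lemma exteriorPower_eq_span (k : ℕ) :
    ⋀[ℝ]^k E = Submodule.span ℝ (esF b '' {s : Finset (Fin N) | s.card = k}) := by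
  refine le_antisymm ?_ ?_
  · rw [← ιMulti_span_fixedDegree ℝ k, Submodule.span_le]
    rintro _ ⟨v, rfl⟩
    have hv : (fun i => ∑ j, b.repr (v i) j • b j) = v := funext fun i => b.sum_repr (v i)
    have expand : ιMulti ℝ k v =
        ∑ r : Fin k → Fin N, (∏ i, b.repr (v i) (r i)) • ιMulti ℝ k (fun i => b (r i)) := by
      conv_lhs => rw [← hv]
      rw [show (ιMulti ℝ k) (fun i => ∑ j, b.repr (v i) j • b j)
          = (ιMulti ℝ k).toMultilinearMap (fun i => ∑ j, b.repr (v i) j • b j) from rfl,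
        MultilinearMap.map_sum]
      exact Finset.sum_congr rfl fun r _ => MultilinearMap.map_smul_univ _ _ _
    rw [expand]
    refine Submodule.sum_mem _ fun r _ => Submodule.smul_mem _ _ ?_
    by_cases hr : Function.Injective r
    · have hperm : (List.ofFn r).Perm ((Finset.image r Finset.univ).sort (· ≤ ·)) := by
        refine List.perm_of_nodup_nodup_toFinset_eq
          (List.nodup_ofFn.mpr hr) (Finset.sort_nodup _ _) ?_
        ext a
        simp [List.mem_ofFn]
      obtain ⟨ε, -, he⟩ := eL_perm b hperm
      rw [← eL_ofFn, he]
      refine Submodule.smul_mem _ _ (Submodule.subset_span ⟨Finset.image r Finset.univ, ?_, rfl⟩)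
      simp [Finset.card_image_of_injective _ hr]
    · rw [← eL_ofFn, eL_eq_zero_of_not_nodup b (fun hn => hr (List.nodup_ofFn.mp hn))]
      exact Submodule.zero_mem _
  · rw [Submodule.span_le]
    rintro _ ⟨s, hs, rfl⟩
    have := esF_mem b s
    rwa [show s.card = k from hs] at this

include b in
lemma exteriorPower_eq_bot {m : ℕ} (hm : N < m) : (⋀[ℝ]^m E : Submodule ℝ _) = ⊥ := by
  rw [exteriorPower_eq_span b m]
  have : {s : Finset (Fin N) | s.card = m} = ∅ := by
    refine Set.eq_empty_of_forall_notMem fun s hs => ?_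
    have h2 := Finset.card_le_univ s
    rw [hs, Fintype.card_fin] at h2
    omega
  rw [this, Set.image_empty, Submodule.span_empty]

/-- the coefficient-of-top-form functional -/
def detF : ∀ i : ℕ, E [⋀^Fin i]→ₗ[ℝ] ℝ := fun i =>
  if h : i = N then (b.det).domDomCongr (finCongr h.symm) else 0

def phiA : ExteriorAlgebra ℝ E →ₗ[ℝ] ℝ := liftAlternating (detF b)

lemma phiA_esF_of_card_ne {s : Finset (Fin N)} (h : s.card ≠ N) : phiA b (esF b s) = 0 := by
  rw [esF, eL_eq_ιMulti, phiA, liftAlternating_apply_ιMulti, detF, dif_neg, AlternatingMap.zero_apply]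
  rwa [Finset.length_sort]

lemma phiA_esF_univ : phiA b (esF b (Finset.univ : Finset (Fin N))) ≠ 0 := by
  have hl : ((Finset.univ : Finset (Fin N)).sort (· ≤ ·)).length = N := by
    simp [Finset.length_sort]
  rw [esF, eL_eq_ιMulti, phiA, liftAlternating_apply_ιMulti, detF, dif_pos hl,
    AlternatingMap.domDomCongr_apply]
  set l := ((Finset.univ : Finset (Fin N)).sort (· ≤ ·)) with hldef
  have hnd : l.Nodup := Finset.sort_nodup _ _
  have hπ : Function.Injective (fun j : Fin N => l.get (finCongr hl.symm j)) := by
    intro i j hij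
    exact (finCongr hl.symm).injective (List.nodup_iff_injective_get.mp hnd hij)
  have hbij := Finite.injective_iff_bijective.mp hπ
  set σ := Equiv.ofBijective _ hbij with hσ
  have hcomp : ((fun i => b (l.get i)) ∘ (finCongr hl.symm)) = (⇑b ∘ ⇑σ) := rfl
  rw [hcomp, AlternatingMap.map_perm, Module.Basis.det_self]
  rcases Int.units_eq_one_or (Equiv.Perm.sign σ) with hs | hs <;> rw [hs] <;> simp

lemma phiA_self_compl (s : Finset (Fin N)) : phiA b (esF b s * esF b sᶜ) ≠ 0 := by
  obtain ⟨ε, hε, he⟩ := esF_mul_of_disjoint b (disjoint_compl_right : Disjoint s sᶜ)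
  rw [he, map_smul, Finset.union_compl]
  rcases hε with rfl | rfl <;> simpa using phiA_esF_univ b

lemma phiA_mul_eq_zero {s t : Finset (Fin N)} (h : t ≠ sᶜ) (hcard : s.card + t.card = N) :
    phiA b (esF b s * esF b t) = 0 := by
  by_cases hd : Disjoint s t
  · exfalso
    apply h
    have hsub : t ⊆ sᶜ := fun a ha =>
      Finset.mem_compl.mpr fun hs' => (Finset.disjoint_left.mp hd) hs' ha
    refine Finset.eq_of_subset_of_card_le hsub ?_
    rw [Finset.card_compl, Fintype.card_fin]
    omega
  · rw [esF_mul_of_not_disjoint b hd, map_zero]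

lemma nondeg {k : ℕ} (hk : k ≤ N) {x : ExteriorAlgebra ℝ E} (hx : x ∈ ⋀[ℝ]^k E)
    (h : ∀ s : Finset (Fin N), s.card = N - k → phiA b (x * esF b s) = 0) : x = 0 := by
  rw [exteriorPower_eq_span b k, Set.image_eq_range] at hx
  obtain ⟨c, hc⟩ := (Submodule.mem_span_range_iff_exists_fun ℝ).mp hx
  have hz : ∀ s₀ : {s : Finset (Fin N) // s ∈ {s : Finset (Fin N) | s.card = k}}, c s₀ = 0 := by
    intro s₀
    have hcards₀ : (s₀ : Finset (Fin N)).card = k := s₀.2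
    have h1 := h (s₀ : Finset (Fin N))ᶜ (by rw [Finset.card_compl, Fintype.card_fin, hcards₀])
    rw [← hc, Finset.sum_mul] at h1
    simp_rw [smul_mul_assoc] at h1
    rw [map_sum] at h1
    rw [Finset.sum_eq_single s₀] at h1
    · rw [map_smul, smul_eq_mul] at h1
      exact (mul_eq_zero.mp h1).resolve_right (phiA_self_compl b _)
    · intro s _ hne
      rw [map_smul, phiA_mul_eq_zero b, smul_zero]
      · exact fun hcc => hne (Subtype.ext (compl_injective hcc.symm))
      · rw [s.2, Finset.card_compl, Fintype.card_fin, hcards₀]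
        omega
    · intro hmem
      exact absurd (Finset.mem_univ s₀) hmem
  rw [← hc]
  simp [hz]

lemma omega_comm {w : ExteriorAlgebra ℝ E} (hw : w ∈ ⋀[ℝ]^2 E) (x : ExteriorAlgebra ℝ E) :
    w * x = x * w := by
  have hsw : ∀ p q : E, ι ℝ p * ι ℝ q = -(ι ℝ q * ι ℝ p) := fun p q =>
    eq_neg_of_add_eq_zero_left (ι_add_mul_swap p q)
  rw [exteriorPower, sq] at hw
  refine Submodule.mul_induction_on hw ?_ (fun y z hy hz => by rw [add_mul, mul_add, hy, hz]) 
  rintro _ ⟨u, rfl⟩ _ ⟨v, rfl⟩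
  induction x using ExteriorAlgebra.induction with
  | algebraMap r => exact (Algebra.commutes r _).symm
  | ι z =>
      calc ι ℝ u * ι ℝ v * ι ℝ z = ι ℝ u * (ι ℝ v * ι ℝ z) := mul_assoc _ _ _
        _ = -(ι ℝ u * (ι ℝ z * ι ℝ v)) := by rw [hsw v z, mul_neg]
        _ = -((ι ℝ u * ι ℝ z) * ι ℝ v) := by rw [mul_assoc]
        _ = ((ι ℝ z * ι ℝ u) * ι ℝ v) := by rw [hsw u z, neg_mul, neg_neg]
        _ = ι ℝ z * (ι ℝ u * ι ℝ v) := mul_assoc _ _ _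
  | mul a c iha ihc => rw [← mul_assoc, iha, mul_assoc, ihc, mul_assoc]
  | add a c iha ihc => rw [mul_add, iha, ihc, add_mul]

lemma mul_mem_expow {a c : ℕ} {x y : ExteriorAlgebra ℝ E} (hx : x ∈ ⋀[ℝ]^a E)
    (hy : y ∈ ⋀[ℝ]^c E) : x * y ∈ ⋀[ℝ]^(a + c) E := by
  rw [exteriorPower, pow_add]
  exact Submodule.mul_mem_mul hx hy

end Aux


/-- Integer-indexed exterior power: `⋀^j E` for `j ≥ 0`, and `{0}` for `j < 0`. -/
noncomputable def exteriorPowerZ (E : Type*) [AddCommGroup E] [Module ℝ E] (j : ℤ) :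
    Submodule ℝ (ExteriorAlgebra ℝ E) :=
  if 0 ≤ j then ⋀[ℝ]^j.toNat E else ⊥

set_option maxHeartbeats 1000000 in
/-- for `0 ≤ k ≤ n` and `α ∈ ⋀^k E`, one has `α ∧ η = 0` for every
`η ∈ ⋀^{2n-k} E` with `ω ∧ η = 0`, if and only if `α = ω ∧ β` for some `β ∈ ⋀^{k-2} E`
(where `⋀^{k-2} E = {0}` if `k < 2`). -/
theorem wedge_annihilates_kerW_iff {E : Type*} [AddCommGroup E] [Module ℝ E]
    [FiniteDimensional ℝ E] (n : ℕ) (hn : 1 ≤ n)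
    (hdim : Module.finrank ℝ E = 2 * n)
    (ω : ExteriorAlgebra ℝ E) (hω : ω ∈ ⋀[ℝ]^2 E) (hωn : ω ^ n ≠ 0)
    (k : ℕ) (hk : k ≤ n) (α : ExteriorAlgebra ℝ E) (hα : α ∈ ⋀[ℝ]^k E) :
    (∀ η ∈ ⋀[ℝ]^(2 * n - k) E, ω * η = 0 → α * η = 0) ↔
      ∃ β ∈ exteriorPowerZ E ((k : ℤ) - 2), α = ω * β := by
  classical
  let b : Module.Basis (Fin (2 * n)) ℝ E := (Module.finBasis ℝ E).reindex (finCongr hdim)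
  constructor
  · intro H
    by_cases hk2 : 2 ≤ k
    · have hkN : k ≤ 2 * n := by omega
      set m : ℕ := 2 * n - k with hm
      set m2 : ℕ := 2 * n - (k - 2) with hm2
      have hm2' : m2 = 2 + m := by omega
      let f0 : (⋀[ℝ]^m E : Submodule ℝ _) →ₗ[ℝ] ℝ :=
        (phiA b) ∘ₗ (LinearMap.mulLeft ℝ α) ∘ₗ (Submodule.subtype _)
      have hWmem : ∀ η : (⋀[ℝ]^m E : Submodule ℝ _),
          ω * (η : ExteriorAlgebra ℝ E) ∈ ⋀[ℝ]^m2 E := fun η => by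
        have := mul_mem_expow hω η.2
        rwa [← hm2'] at this
      let W' : (⋀[ℝ]^m E : Submodule ℝ _) →ₗ[ℝ] (⋀[ℝ]^m2 E : Submodule ℝ _) :=
        LinearMap.codRestrict _ ((LinearMap.mulLeft ℝ ω) ∘ₗ (Submodule.subtype _)) hWmem
      have hW'val : ∀ η : (⋀[ℝ]^m E : Submodule ℝ _),
          ((W' η : (⋀[ℝ]^m2 E : Submodule ℝ _)) : ExteriorAlgebra ℝ E) = ω * η := fun η => rfl
      have hker : LinearMap.ker W' ≤ LinearMap.ker f0 := by
        intro η hη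
        have hη0 : ω * (η : ExteriorAlgebra ℝ E) = 0 := by
          have := congrArg (Subtype.val) (LinearMap.mem_ker.mp hη)
          simpa [hW'val] using this
        have hα0 : α * (η : ExteriorAlgebra ℝ E) = 0 := H _ η.2 hη0
        show phiA b (α * (η : ExteriorAlgebra ℝ E)) = 0
        rw [hα0, map_zero]
      let h1 : ((⋀[ℝ]^m E : Submodule ℝ _) ⧸ LinearMap.ker W') →ₗ[ℝ] ℝ :=
        (LinearMap.ker W').liftQ f0 hker
      let h2 : (LinearMap.range W' : Submodule ℝ _) →ₗ[ℝ] ℝ :=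
        h1 ∘ₗ (W'.quotKerEquivRange.symm : (LinearMap.range W') →ₗ[ℝ] _)
      obtain ⟨g, hg⟩ := LinearMap.exists_extend h2
      have hgW : ∀ η : (⋀[ℝ]^m E : Submodule ℝ _), g (W' η) = f0 η := by
        intro η
        have h3 : g (W' η) = h2 ⟨W' η, LinearMap.mem_range_self _ η⟩ := by
          rw [← hg]; rfl
        rw [h3]
        show h1 (W'.quotKerEquivRange.symm ⟨W' η, _⟩) = f0 η
        rw [W'.quotKerEquivRange_symm_apply_image η]
        show h1 (Submodule.Quotient.mk η) = f0 η
        exact Submodule.liftQ_apply _ f0 η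
      -- construction of β
      have hcompl_mem : ∀ t : {t : Finset (Fin (2 * n)) // t.card = m2},
          esF b (t.1)ᶜ ∈ ⋀[ℝ]^(k - 2) E := by
        intro t
        have := esF_mem b (t.1)ᶜ
        rwa [Finset.card_compl, Fintype.card_fin, t.2, show 2 * n - m2 = k - 2 by omega] at this
      have hesF_mem2 : ∀ t : {t : Finset (Fin (2 * n)) // t.card = m2},
          esF b t.1 ∈ ⋀[ℝ]^m2 E := fun t => by
        have := esF_mem b t.1; rwa [t.2] at this
      let β : ExteriorAlgebra ℝ E :=
        ∑ t : {t : Finset (Fin (2 * n)) // t.card = m2},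
          ((g ⟨esF b t.1, hesF_mem2 t⟩) / (phiA b (esF b (t.1)ᶜ * esF b t.1))) • esF b (t.1)ᶜ
      have hβ : β ∈ ⋀[ℝ]^(k - 2) E :=
        Submodule.sum_mem _ fun t _ => Submodule.smul_mem _ _ (hcompl_mem t)
      -- the key claim
      have claim : ∀ ξ (hξ : ξ ∈ ⋀[ℝ]^m2 E), phiA b (β * ξ) = g ⟨ξ, hξ⟩ := by
        intro ξ hξ
        have hξ' : ξ ∈ Submodule.span ℝ (esF b '' {s : Finset (Fin (2 * n)) | s.card = m2}) := by
          rwa [← exteriorPower_eq_span b m2]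
        induction hξ' using Submodule.span_induction with
        | mem x hx =>
            obtain ⟨t', ht', rfl⟩ := hx
            have ht'c : (t' : Finset (Fin (2 * n))).card = m2 := ht'
            have hmemx : esF b t' ∈ ⋀[ℝ]^m2 E := ht'c ▸ esF_mem b t'
            show phiA b (β * esF b t') = _
            rw [show β * esF b t' = ∑ t : {t : Finset (Fin (2 * n)) // t.card = m2},
              ((g ⟨esF b t.1, hesF_mem2 t⟩) / (phiA b (esF b (t.1)ᶜ * esF b t.1))) •
                (esF b (t.1)ᶜ * esF b t') by rw [Finset.sum_mul]; simp [smul_mul_assoc]]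
            rw [map_sum]
            rw [Finset.sum_eq_single (⟨t', ht'c⟩ : {t : Finset (Fin (2 * n)) // t.card = m2})]
            · rw [map_smul, smul_eq_mul, div_mul_cancel₀]
              · have h1 : phiA b (esF b (t')ᶜ * esF b t') ≠ 0 := by
                  have := phiA_self_compl b (t')ᶜ
                  rwa [compl_compl] at this
                exact h1
            · intro t _ hne
              have hz0 : phiA b (esF b (t.1)ᶜ * esF b t') = 0 := by
                refine phiA_mul_eq_zero b ?_ ?_
                · intro hcc
                  rw [compl_compl] at hcc
                  exact hne (Subtype.ext hcc.symm)
                · rw [Finset.card_compl, Fintype.card_fin, t.2, ht'c]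
                  omega
              rw [map_smul, hz0, smul_zero]
            · intro hmem
              exact absurd (Finset.mem_univ _) hmem
        | zero =>
            rw [mul_zero, map_zero,
              show (⟨0, hξ⟩ : (⋀[ℝ]^m2 E : Submodule ℝ _)) = 0 from rfl, map_zero]
        | add x y hx hy ihx ihy =>
            have hx' : x ∈ ⋀[ℝ]^m2 E := by rwa [exteriorPower_eq_span b m2]
            have hy' : y ∈ ⋀[ℝ]^m2 E := by rwa [exteriorPower_eq_span b m2]
            rw [mul_add, map_add, ihx hx', ihy hy']
            rw [show (⟨x + y, hξ⟩ : (⋀[ℝ]^m2 E : Submodule ℝ _))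
              = (⟨x, hx'⟩ : (⋀[ℝ]^m2 E : Submodule ℝ _)) + ⟨y, hy'⟩ from rfl, map_add]
        | smul a x hx ihx =>
            have hx' : x ∈ ⋀[ℝ]^m2 E := by rwa [exteriorPower_eq_span b m2]
            rw [mul_smul_comm, map_smul, ihx hx']
            rw [show (⟨a • x, hξ⟩ : (⋀[ℝ]^m2 E : Submodule ℝ _))
              = a • (⟨x, hx'⟩ : (⋀[ℝ]^m2 E : Submodule ℝ _)) from rfl, map_smul]
      -- finish
      have hωβ : ω * β ∈ ⋀[ℝ]^k E := by
        have := mul_mem_expow hω hβ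
        rwa [show 2 + (k - 2) = k by omega] at this
      have hDz : α - ω * β = 0 := by
        apply nondeg b hkN (Submodule.sub_mem _ hα hωβ)
        intro s hs
        have hsm : esF b s ∈ ⋀[ℝ]^m E := by
          have := esF_mem b s; rwa [hs] at this
        have hωesF : ω * esF b s ∈ ⋀[ℝ]^m2 E := hWmem ⟨esF b s, hsm⟩
        rw [sub_mul, map_sub]
        have e2 : ω * β * esF b s = β * (ω * esF b s) := by
          rw [omega_comm hω β, mul_assoc]
        rw [e2, claim _ hωesF]
        have e3 : (⟨ω * esF b s, hωesF⟩ : (⋀[ℝ]^m2 E : Submodule ℝ _))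
            = W' ⟨esF b s, hsm⟩ := rfl
        rw [e3, hgW]
        show phiA b (α * esF b s) - phiA b (α * esF b s) = 0
        exact sub_self _
      refine ⟨β, ?_, by rw [← sub_eq_zero]; exact hDz⟩
      rw [exteriorPowerZ, if_pos (by omega : (0:ℤ) ≤ (k : ℤ) - 2)]
      have : ((k : ℤ) - 2).toNat = k - 2 := by omega
      rw [this]
      exact hβ
    · -- k ≤ 1
      have hαz : α = 0 := by
        apply nondeg b (by omega : k ≤ 2 * n) hα
        intro s hs
        have hη : esF b s ∈ ⋀[ℝ]^(2 * n - k) E := hs ▸ esF_mem b s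
        have h0 : ω * esF b s = 0 := by
          have hmem := mul_mem_expow hω hη
          rw [exteriorPower_eq_bot b (by omega : 2 * n < 2 + (2 * n - k))] at hmem
          simpa using hmem
        rw [H (esF b s) hη h0, map_zero]
      exact ⟨0, Submodule.zero_mem _, by rw [hαz, mul_zero]⟩
  · rintro ⟨β, hβ, rfl⟩ η hη hωη
    rw [omega_comm hω β, mul_assoc, hωη, mul_zero]
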